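/- The quaternion algebra (-1,-1) over the field ℚ₂ of 2-adic numbers is a division algebra. -/

import Mathlib

open Quaternion

lemma zmod8 : ∀ a b c : ZMod (2^3), 1 + a^2 + b^2 + c^2 ≠ 0 := by decide

lemma int_sum (x y z : ℤ_[2]) : 1 + x^2 + y^2 + z^2 ≠ 0 := by
  intro h
  have := congrArg (PadicInt.toZModPow 3) h
  simp only [map_add, map_pow, map_one, map_zero] at this
  exact zmod8 _ _ _ this

lemma key (a b c d : ℚ_[2]) (hb : ‖b‖ ≤ ‖a‖) (hc : ‖c‖ ≤ ‖a‖) (hd : ‖d‖ ≤ ‖a‖)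
    (h : a^2 + b^2 + c^2 + d^2 = 0) : a = 0 := by
  by_contra ha
  have hna : (0:ℝ) < ‖a‖ := norm_pos_iff.mpr ha
  have hx : ‖b / a‖ ≤ 1 := by rw [norm_div, div_le_one hna]; exact hb
  have hy : ‖c / a‖ ≤ 1 := by rw [norm_div, div_le_one hna]; exact hc
  have hz : ‖d / a‖ ≤ 1 := by rw [norm_div, div_le_one hna]; exact hd
  set x : ℤ_[2] := ⟨b / a, hx⟩
  set y : ℤ_[2] := ⟨c / a, hy⟩
  set z : ℤ_[2] := ⟨d / a, hz⟩
  apply int_sum x y z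
  have : ((1 + x^2 + y^2 + z^2 : ℤ_[2]) : ℚ_[2]) = 0 := by
    push_cast
    show 1 + (b/a)^2 + (c/a)^2 + (d/a)^2 = 0
    field_simp
    linear_combination h
  exact PadicInt.coe_eq_zero.mp this


lemma key2 (a b c d : ℚ_[2]) (hb : ‖b‖ ≤ ‖a‖) (hc : ‖c‖ ≤ ‖a‖) (hd : ‖d‖ ≤ ‖a‖)
    (h : a^2 + b^2 + c^2 + d^2 = 0) : a = 0 ∧ b = 0 ∧ c = 0 ∧ d = 0 := by
  have ha := key a b c d hb hc hd h
  rw [ha, norm_zero] at hb hc hd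
  exact ⟨ha, norm_le_zero_iff.mp hb, norm_le_zero_iff.mp hc, norm_le_zero_iff.mp hd⟩

lemma sum4 (a b c d : ℚ_[2]) (h : a^2 + b^2 + c^2 + d^2 = 0) :
    a = 0 ∧ b = 0 ∧ c = 0 ∧ d = 0 := by
  rcases le_total ‖a‖ ‖b‖ with hab | hab <;> rcases le_total ‖c‖ ‖d‖ with hcd | hcd
  · rcases le_total ‖b‖ ‖d‖ with hbd | hbd
    · obtain ⟨h1, h2, h3, h4⟩ := key2 d a b c (hab.trans hbd) hbd hcd
        (by linear_combination h)
      exact ⟨h2, h3, h4, h1⟩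
    · obtain ⟨h1, h2, h3, h4⟩ := key2 b a c d hab (hcd.trans hbd) hbd
        (by linear_combination h)
      exact ⟨h2, h1, h3, h4⟩
  · rcases le_total ‖b‖ ‖c‖ with hbc | hbc
    · obtain ⟨h1, h2, h3, h4⟩ := key2 c a b d (hab.trans hbc) hbc hcd
        (by linear_combination h)
      exact ⟨h2, h3, h1, h4⟩
    · obtain ⟨h1, h2, h3, h4⟩ := key2 b a c d hab hbc (hcd.trans hbc)
        (by linear_combination h)
      exact ⟨h2, h1, h3, h4⟩
  · rcases le_total ‖a‖ ‖d‖ with had | had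
    · obtain ⟨h1, h2, h3, h4⟩ := key2 d a b c had (hab.trans had) hcd
        (by linear_combination h)
      exact ⟨h2, h3, h4, h1⟩
    · obtain ⟨h1, h2, h3, h4⟩ := key2 a b c d hab (hcd.trans had) had h
      exact ⟨h1, h2, h3, h4⟩
  · rcases le_total ‖a‖ ‖c‖ with hac | hac
    · obtain ⟨h1, h2, h3, h4⟩ := key2 c a b d hac (hab.trans hac) hcd
        (by linear_combination h)
      exact ⟨h2, h3, h1, h4⟩
    · obtain ⟨h1, h2, h3, h4⟩ := key2 a b c d hab hac (hcd.trans hac) h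
      exact ⟨h1, h2, h3, h4⟩

/-- The quaternion algebra `(-1,-1)` over the 2-adic numbers `ℚ₂` is a division
algebra: every nonzero element has a two-sided inverse. -/
theorem quaternion_minus_one_minus_one_over_Q2_is_division :
    ∀ x : ℍ[ℚ_[2], -1, -1], x ≠ 0 → ∃ y : ℍ[ℚ_[2], -1, -1], x * y = 1 ∧ y * x = 1 := by
  show ∀ x : ℍ[ℚ_[2]], x ≠ 0 → ∃ y : ℍ[ℚ_[2]], x * y = 1 ∧ y * x = 1
  intro x hx
  have hn : normSq x ≠ 0 := by
    intro h0
    rw [normSq_def'] at h0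
    obtain ⟨h1, h2, h3, h4⟩ := sum4 _ _ _ _ h0
    exact hx (QuaternionAlgebra.ext h1 h2 h3 h4)
  refine ⟨(normSq x)⁻¹ • star x, ?_, ?_⟩
  · rw [← coe_mul_eq_smul, ← mul_assoc, ← coe_commutes, mul_assoc, self_mul_star, ← coe_mul, inv_mul_cancel₀ hn, coe_one]
  · rw [← coe_mul_eq_smul, mul_assoc, star_mul_self, ← coe_mul, inv_mul_cancel₀ hn, coe_one]
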